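/- Let E, F, G, H, I, J, K, L, M, N, P, Q, R be real constants and define a(u₁,u₂) = (I/2)u₁² + J·u₁ + E·u₁u₂ + F·u₂ + K, b(u₁,u₂) = −(I/2)u₂² + L·u₂ + M·u₁u₂ + N·u₁ + R, c(u₁,u₂) = (M/2)u₁² + P·u₁ + (E/2)u₂² + G·u₂ + (Q+H). Then the three identities (for all (u₁,u₂) ∈ ℝ²): c·a₁₁/12 − a·b₁₂/4 − c·b₂₂/6 + b·c₂₂/4 = 0, c·a₁₁/6 + b·a₁₂/4 − c·b₂₂/12 − a·c₁₁/4 = 0, and b·a₁c₂ − c·a₁b₂ + c·a₂b₁ − b·a₂c₁ − a·b₁c₂ + a·b₂c₁ = 0 hold if and only if E·N − J·M + I·P = 0, E·L − F·M + I·G = 0, E·R − K·M + I·(H+Q) = 0, and K·(L·P − N·G) + R·(J·G − F·P) + (Q+H)·(F·N − J·L) = 0. -/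

import Mathlib

/-- First-order partial derivative with respect to the first variable `u₁`. -/
noncomputable def p1 (f : ℝ × ℝ → ℝ) (p : ℝ × ℝ) : ℝ := fderiv ℝ f p (1, 0)

/-- First-order partial derivative with respect to the second variable `u₂`. -/
noncomputable def p2 (f : ℝ × ℝ → ℝ) (p : ℝ × ℝ) : ℝ := fderiv ℝ f p (0, 1)

/-- Second-order partial derivative in the first variable twice: `f₁₁`. -/
noncomputable def p11 (f : ℝ × ℝ → ℝ) : ℝ × ℝ → ℝ := p1 (p1 f)

/-- Mixed second-order partial derivative: `f₁₂`. -/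
noncomputable def p12 (f : ℝ × ℝ → ℝ) : ℝ × ℝ → ℝ := p1 (p2 f)

/-- Second-order partial derivative in the second variable twice: `f₂₂`. -/
noncomputable def p22 (f : ℝ × ℝ → ℝ) : ℝ × ℝ → ℝ := p2 (p2 f)

/-- A general quadratic polynomial function on `ℝ × ℝ`. -/
noncomputable def Qf (α β γ δ ε ζ : ℝ) : ℝ × ℝ → ℝ :=
  fun q => α * (q.1 * q.1) + β * q.1 + γ * (q.1 * q.2) + δ * (q.2 * q.2) + ε * q.2 + ζ

lemma p1_Qf (α β γ δ ε ζ : ℝ) : p1 (Qf α β γ δ ε ζ) = Qf 0 0 0 0 0 0 + fun p => 2 * α * p.1 + γ * p.2 + β := by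
  funext p
  have h1 : HasFDerivAt (fun q : ℝ × ℝ => q.1) (ContinuousLinearMap.fst ℝ ℝ ℝ) p := hasFDerivAt_fst
  have h2 : HasFDerivAt (fun q : ℝ × ℝ => q.2) (ContinuousLinearMap.snd ℝ ℝ ℝ) p := hasFDerivAt_snd
  have H := ((((((h1.mul h1).const_mul α).add (h1.const_mul β)).add
      ((h1.mul h2).const_mul γ)).add ((h2.mul h2).const_mul δ)).add (h2.const_mul ε)).add_const ζ
  show p1 (Qf α β γ δ ε ζ) p = Qf 0 0 0 0 0 0 p + (2 * α * p.1 + γ * p.2 + β)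
  unfold p1 Qf
  rw [(show HasFDerivAt (fun q : ℝ × ℝ => α * (q.1 * q.1) + β * q.1 + γ * (q.1 * q.2) + δ * (q.2 * q.2) + ε * q.2 + ζ) _ p from H).fderiv]
  simp
  ring

lemma p2_Qf (α β γ δ ε ζ : ℝ) : p2 (Qf α β γ δ ε ζ) = Qf 0 0 0 0 0 0 + fun p => γ * p.1 + 2 * δ * p.2 + ε := by
  funext p
  have h1 : HasFDerivAt (fun q : ℝ × ℝ => q.1) (ContinuousLinearMap.fst ℝ ℝ ℝ) p := hasFDerivAt_fst
  have h2 : HasFDerivAt (fun q : ℝ × ℝ => q.2) (ContinuousLinearMap.snd ℝ ℝ ℝ) p := hasFDerivAt_snd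
  have H := ((((((h1.mul h1).const_mul α).add (h1.const_mul β)).add
      ((h1.mul h2).const_mul γ)).add ((h2.mul h2).const_mul δ)).add (h2.const_mul ε)).add_const ζ
  show p2 (Qf α β γ δ ε ζ) p = Qf 0 0 0 0 0 0 p + (γ * p.1 + 2 * δ * p.2 + ε)
  unfold p2 Qf
  rw [(show HasFDerivAt (fun q : ℝ × ℝ => α * (q.1 * q.1) + β * q.1 + γ * (q.1 * q.2) + δ * (q.2 * q.2) + ε * q.2 + ζ) _ p from H).fderiv]
  simp
  ring

lemma Qf_eq (α β γ : ℝ) :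
    (Qf 0 0 0 0 0 0 + fun p : ℝ × ℝ => α * p.1 + β * p.2 + γ) = Qf 0 α 0 0 β γ := by
  funext p
  simp [Qf]

lemma p1_Qf' (α β γ δ ε ζ : ℝ) : p1 (Qf α β γ δ ε ζ) = Qf 0 (2 * α) 0 0 γ β := by
  rw [p1_Qf]; exact Qf_eq _ _ _

lemma p2_Qf' (α β γ δ ε ζ : ℝ) : p2 (Qf α β γ δ ε ζ) = Qf 0 γ 0 0 (2 * δ) ε := by
  rw [p2_Qf]; exact Qf_eq _ _ _

/-- Step 3 of the locally conformally flat characterization: for the quadratic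
polynomials `a, b, c` produced by Step 2, the remaining Weyl components
`W₁₃₃₄, W₂₄₃₄, W₃₄₃₄` vanish iff the coefficients satisfy the four relations. -/
theorem walker_lcf_step3 (E F G H I J K L M N P Q R : ℝ)
    (a b c : ℝ × ℝ → ℝ)
    (hadef : ∀ p : ℝ × ℝ, a p = I / 2 * p.1 ^ 2 + J * p.1 + E * p.1 * p.2 + F * p.2 + K)
    (hbdef : ∀ p : ℝ × ℝ, b p = -(I / 2) * p.2 ^ 2 + L * p.2 + M * p.1 * p.2 + N * p.1 + R)
    (hcdef : ∀ p : ℝ × ℝ, c p = M / 2 * p.1 ^ 2 + P * p.1 + E / 2 * p.2 ^ 2 + G * p.2 + (Q + H)) :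
    (∀ p : ℝ × ℝ,
      c p * p11 a p / 12 - a p * p12 b p / 4 - c p * p22 b p / 6 + b p * p22 c p / 4 = 0 ∧
      c p * p11 a p / 6 + b p * p12 a p / 4 - c p * p22 b p / 12 - a p * p11 c p / 4 = 0 ∧
      b p * p1 a p * p2 c p - c p * p1 a p * p2 b p + c p * p2 a p * p1 b p
        - b p * p2 a p * p1 c p - a p * p1 b p * p2 c p + a p * p2 b p * p1 c p = 0)
    ↔
    (E * N - J * M + I * P = 0 ∧
     E * L - F * M + I * G = 0 ∧
     E * R - K * M + I * (H + Q) = 0 ∧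
     K * (L * P - N * G) + R * (J * G - F * P) + (Q + H) * (F * N - J * L) = 0) := by
  have ha : a = Qf (I / 2) J E 0 F K := by
    funext p; rw [hadef]; simp [Qf]; ring
  have hb : b = Qf 0 N M (-(I / 2)) L R := by
    funext p; rw [hbdef]; simp [Qf]; ring
  have hc : c = Qf (M / 2) P 0 (E / 2) G (Q + H) := by
    funext p; rw [hcdef]; simp [Qf]; ring
  subst ha hb hc
  simp only [p11, p12, p22, p1_Qf', p2_Qf', Qf]
  constructor
  · intro h
    have h00 := h (0, 0)
    have h10 := h (1, 0)
    have h01 := h (0, 1)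
    simp only [Prod.fst, Prod.snd] at h00 h10 h01
    refine ⟨?_, ?_, ?_, ?_⟩
    · linear_combination 4 * h10.1 - 4 * h00.1
    · linear_combination 4 * h01.1 - 4 * h00.1
    · linear_combination 4 * h00.1
    · linear_combination h00.2.2
  · rintro ⟨h1, h2, h3, h4⟩ p
    refine ⟨?_, ?_, ?_⟩
    · linear_combination (p.1 * h1 + p.2 * h2 + h3) / 4
    · linear_combination (p.1 * h1 + p.2 * h2 + h3) / 4
    · set u := p.1 with hu
      set v := p.2 with hv
      by_cases hM : M = 0
      · by_cases hE : E = 0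
        · by_cases hI : I = 0
          · subst hM hE hI
            linear_combination h4
          · -- use I-identity
            apply mul_left_cancel₀ hI
            linear_combination
              ((I / 2 * (u * u) + J * u + E * (u * v) + F * v + K) * (-(I) * v + L + M * u)
                - (-(I / 2) * (v * v) + L * v + M * (u * v) + N * u + R) * (E * u + F)
                - u * ((I * u + J + E * v) * (-(I) * v + L + M * u) - (M * v + N) * (E * u + F))) * h1
              + ((-(I / 2) * (v * v) + L * v + M * (u * v) + N * u + R) * (I * u + J + E * v)
                - (I / 2 * (u * u) + J * u + E * (u * v) + F * v + K) * (M * v + N)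
                - v * ((I * u + J + E * v) * (-(I) * v + L + M * u) - (M * v + N) * (E * u + F))) * h2
              - ((I * u + J + E * v) * (-(I) * v + L + M * u) - (M * v + N) * (E * u + F)) * h3
        · -- use E-identity
          apply mul_left_cancel₀ hE
          linear_combination
            (u * ((I * u + J + E * v) * (E * v + G) - (M * u + P) * (E * u + F))
              - (I / 2 * (u * u) + J * u + E * (u * v) + F * v + K) * (E * v + G)
              + (M / 2 * (u * u) + P * u + E / 2 * (v * v) + G * v + (Q + H)) * (E * u + F)) * h1
            + (v * ((I * u + J + E * v) * (E * v + G) - (M * u + P) * (E * u + F))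
              + (I / 2 * (u * u) + J * u + E * (u * v) + F * v + K) * (M * u + P)
              - (M / 2 * (u * u) + P * u + E / 2 * (v * v) + G * v + (Q + H)) * (I * u + J + E * v)) * h2
            + ((I * u + J + E * v) * (E * v + G) - (M * u + P) * (E * u + F)) * h3
      · -- use M-identity
        apply mul_left_cancel₀ hM
        linear_combination
          (u * ((M * v + N) * (E * v + G) - (M * u + P) * (-(I) * v + L + M * u))
            + (M / 2 * (u * u) + P * u + E / 2 * (v * v) + G * v + (Q + H)) * (-(I) * v + L + M * u)
            - (-(I / 2) * (v * v) + L * v + M * (u * v) + N * u + R) * (E * v + G)) * h1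
          + (v * ((M * v + N) * (E * v + G) - (M * u + P) * (-(I) * v + L + M * u))
            + (-(I / 2) * (v * v) + L * v + M * (u * v) + N * u + R) * (M * u + P)
            - (M / 2 * (u * u) + P * u + E / 2 * (v * v) + G * v + (Q + H)) * (M * v + N)) * h2
          + ((M * v + N) * (E * v + G) - (M * u + P) * (-(I) * v + L + M * u)) * h3
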